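/- arXiv:2406.02628 — 2 statements merged into one kernel-verified Lean document; each statement's English description precedes it below -/
import Mathlib

section
/- Let 𝒜 and ℛ be finite sets, and let (X, A, R) be jointly distributed random variables on a discrete probability space such that X is uniformly distributed on {0,1}, A takes values in 𝒜, and R takes values in ℛ and is independent of the pair (X, A). If there exists a function f : 𝒜 × ℛ → {0,1} with Pr[f(A, R) = X] ≥ 0.51, then the mutual information satisfies I(X : A) ≥ 2·10⁻⁴. -/
open MeasureTheory


private noncomputable def g1fun (t : ℝ) : ℝ := (t+1)*Real.log t - 2*t + 2
private noncomputable def Gfun (t : ℝ) : ℝ := 2*t*(t+2)*Real.log t - (t-1)*(5*t+1)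

private lemma g1_hasDeriv {t : ℝ} (ht : 0 < t) :
    HasDerivAt g1fun (Real.log t + (t+1)*t⁻¹ - 2) t := by
  have h1 : HasDerivAt (fun t : ℝ => (t+1)*Real.log t) (1*Real.log t + (t+1)*t⁻¹) t :=
    (((hasDerivAt_id t).add_const 1)).mul (Real.hasDerivAt_log ht.ne')
  have h2 : HasDerivAt (fun t : ℝ => 2*t) 2 t := by
    simpa using (hasDerivAt_id t).const_mul (2:ℝ)
  have := (h1.sub h2).add_const (2:ℝ)
  have h3 : (1*Real.log t + (t+1)*t⁻¹ - 2) = Real.log t + (t+1)*t⁻¹ - 2 := by ring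
  rw [h3] at this
  exact this

private lemma g1_deriv_nonneg {t : ℝ} (ht : 0 < t) :
    0 ≤ Real.log t + (t+1)*t⁻¹ - 2 := by
  have h := Real.log_le_sub_one_of_pos (x := t⁻¹) (by positivity)
  rw [Real.log_inv] at h
  have h2 : (t+1)*t⁻¹ = 1 + t⁻¹ := by field_simp
  rw [h2]; linarith

private lemma g1_mono : MonotoneOn g1fun (Set.Ioi 0) := by
  have hint : interior (Set.Ioi (0:ℝ)) = Set.Ioi 0 := interior_Ioi
  apply monotoneOn_of_deriv_nonneg (convex_Ioi 0)
  · intro t ht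
    exact (g1_hasDeriv ht).differentiableAt.continuousAt.continuousWithinAt
  · intro t ht
    rw [hint] at ht
    exact (g1_hasDeriv ht).differentiableAt.differentiableWithinAt
  · intro t ht
    rw [hint] at ht
    rw [(g1_hasDeriv ht).deriv]
    exact g1_deriv_nonneg ht

private lemma G_hasDeriv {t : ℝ} (ht : 0 < t) :
    HasDerivAt Gfun (4 * g1fun t) t := by
  have h1 : HasDerivAt (fun t : ℝ => 2*t*(t+2)) (2*1*(t+2) + 2*t*1) t := by
    exact ((hasDerivAt_id t).const_mul 2).mul ((hasDerivAt_id t).add_const 2)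
  have h2 : HasDerivAt (fun t : ℝ => 2*t*(t+2)*Real.log t)
      ((2*1*(t+2) + 2*t*1)*Real.log t + 2*t*(t+2)*t⁻¹) t :=
    h1.mul (Real.hasDerivAt_log ht.ne')
  have h3 : HasDerivAt (fun t : ℝ => (t-1)*(5*t+1)) (1*(5*t+1) + (t-1)*(5*1)) t :=
    ((hasDerivAt_id t).sub_const 1).mul (((hasDerivAt_id t).const_mul 5).add_const 1)
  have h := h2.sub h3
  have heq : (2*1*(t+2) + 2*t*1)*Real.log t + 2*t*(t+2)*t⁻¹ - (1*(5*t+1) + (t-1)*(5*1))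
      = 4 * g1fun t := by
    have h5 : 2*t*(t+2)*t⁻¹ = 2*(t+2) := by field_simp
    rw [h5, g1fun]; ring
  rw [heq] at h
  exact h

private lemma G_nonneg {t : ℝ} (ht : 0 ≤ t) : 0 ≤ Gfun t := by
  rcases eq_or_lt_of_le ht with h0 | ht
  · simp [Gfun, ← h0]
  have hG1 : Gfun 1 = 0 := by simp [Gfun]
  have hg11 : g1fun 1 = 0 := by simp [g1fun]
  rcases le_total t 1 with h1 | h1
  · have hanti : AntitoneOn Gfun (Set.Ioc 0 1) := by
      have hint : interior (Set.Ioc (0:ℝ) 1) = Set.Ioo 0 1 := interior_Ioc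
      apply antitoneOn_of_deriv_nonpos (convex_Ioc 0 1)
      · intro s hs
        exact (G_hasDeriv hs.1).differentiableAt.continuousAt.continuousWithinAt
      · intro s hs
        rw [hint] at hs
        exact (G_hasDeriv hs.1).differentiableAt.differentiableWithinAt
      · intro s hs
        rw [hint] at hs
        rw [(G_hasDeriv hs.1).deriv]
        have : g1fun s ≤ g1fun 1 := g1_mono hs.1 (by norm_num) hs.2.le
        rw [hg11] at this; linarith
    have := hanti (Set.mem_Ioc.2 ⟨ht, h1⟩) (Set.mem_Ioc.2 ⟨one_pos, le_refl 1⟩) h1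
    rw [hG1] at this; exact this
  · have hmono : MonotoneOn Gfun (Set.Ici 1) := by
      have hint : interior (Set.Ici (1:ℝ)) = Set.Ioi 1 := interior_Ici
      apply monotoneOn_of_deriv_nonneg (convex_Ici 1)
      · intro s hs
        exact (G_hasDeriv (lt_of_lt_of_le one_pos hs)).differentiableAt.continuousAt.continuousWithinAt
      · intro s hs
        rw [hint] at hs
        exact (G_hasDeriv (lt_trans one_pos hs)).differentiableAt.differentiableWithinAt
      · intro s hs
        rw [hint] at hs
        rw [(G_hasDeriv (lt_trans one_pos hs)).deriv]
        have : g1fun 1 ≤ g1fun s := g1_mono (by norm_num) (Set.mem_Ioi.2 (lt_trans one_pos hs)) hs.le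
        rw [hg11] at this; linarith
    have := hmono (Set.mem_Ici.2 (le_refl 1)) (Set.mem_Ici.2 h1) h1
    rw [hG1] at this; exact this

/-- Key scalar inequality: `3(t-1)²/(2(t+2)) ≤ t log t - t + 1` for `t ≥ 0`. -/
private lemma key_scalar {t : ℝ} (ht : 0 ≤ t) :
    3*(t-1)^2/(2*(t+2)) ≤ t * Real.log t - t + 1 := by
  have hpos : 0 < 2*(t+2) := by linarith
  rw [div_le_iff₀ hpos]
  have h := G_nonneg ht
  rw [Gfun] at h
  nlinarith [h]



/-- Pointwise KL-type bound. -/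
private lemma key_xy {x y : ℝ} (hx : 0 ≤ x) (hy : 0 ≤ y) (hxy : y = 0 → x = 0) :
    3*(x-y)^2/(2*(x+2*y)) ≤ x * Real.log (x/y) - x + y := by
  rcases eq_or_lt_of_le hy with h0 | hy
  · have hx0 : x = 0 := hxy h0.symm
    simp [hx0, ← h0]
  have ht : 0 ≤ x / y := div_nonneg hx hy.le
  have h := mul_le_mul_of_nonneg_left (key_scalar ht) hy.le
  have hden : (0:ℝ) < x + 2*y := by linarith
  have hL : y * (3*(x/y-1)^2/(2*(x/y+2))) = 3*(x-y)^2/(2*(x+2*y)) := by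
    field_simp
  have hR : y * (x/y * Real.log (x/y) - x/y + 1) = x * Real.log (x/y) - x + y := by
    field_simp
  rw [hL, hR] at h
  exact h

private lemma fiber_sum_one {Ω β : Type*} [Countable Ω] [MeasurableSpace Ω]
    [MeasurableSingletonClass Ω] (μ : Measure Ω) [IsProbabilityMeasure μ]
    [Fintype β] (g : Ω → β) : ∑ b : β, (μ {ω | g ω = b}).toReal = 1 := by
  have hm : ∀ s : Set Ω, MeasurableSet s := fun s => s.to_countable.measurableSet
  have h := MeasureTheory.sum_measure_preimage_singleton (μ := μ)
      (Finset.univ : Finset β) (f := g) (fun b _ => hm _)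
  rw [Finset.coe_univ, Set.preimage_univ, measure_univ] at h
  have he : ∀ b : β, {ω | g ω = b} = g ⁻¹' {b} := fun b => rfl
  calc ∑ b : β, (μ {ω | g ω = b}).toReal
      = (∑ b : β, μ (g ⁻¹' {b})).toReal := by
        rw [ENNReal.toReal_sum (fun b _ => measure_ne_top μ _)]
        simp [he]
    _ = 1 := by rw [h]; simp

set_option maxHeartbeats 1000000 in
/-- **Mutual information lower bound from prediction advantage.**
Let `X : Ω → Bool` be uniform on `{0,1}`, `A : Ω → 𝒜` and `R : Ω → ℛ` random variables with
values in finite sets, where `R` is independent of the pair `(X, A)`.  If some function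
`f : 𝒜 × ℛ → Bool` predicts `X` from `(A, R)` with probability at least `0.51`, then the
mutual information `I(X : A)` (in bits, i.e. with base-2 logarithms) is at least `2·10⁻⁴`. -/
theorem stmt_0 {Ω : Type*} [Countable Ω] [MeasurableSpace Ω] [MeasurableSingletonClass Ω]
    (μ : Measure Ω) [IsProbabilityMeasure μ]
    {𝒜 ℛ : Type*} [Fintype 𝒜] [Fintype ℛ]
    (X : Ω → Bool) (A : Ω → 𝒜) (R : Ω → ℛ)
    (hX : ∀ b : Bool, (μ {ω | X ω = b}).toReal = 1 / 2)
    (hindep : ∀ (b : Bool) (a : 𝒜) (r : ℛ),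
      (μ {ω | X ω = b ∧ A ω = a ∧ R ω = r}).toReal =
        (μ {ω | X ω = b ∧ A ω = a}).toReal * (μ {ω | R ω = r}).toReal)
    (f : 𝒜 × ℛ → Bool)
    (hf : (51 : ℝ) / 100 ≤ (μ {ω | f (A ω, R ω) = X ω}).toReal) :
    (2 : ℝ) / 10 ^ 4 ≤
      ∑ b : Bool, ∑ a : 𝒜,
        (μ {ω | X ω = b ∧ A ω = a}).toReal *
          Real.logb 2 ((μ {ω | X ω = b ∧ A ω = a}).toReal /
            ((μ {ω | X ω = b}).toReal * (μ {ω | A ω = a}).toReal)) := by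
  classical
  have hm : ∀ s : Set Ω, MeasurableSet s := fun s => s.to_countable.measurableSet
  set p : Bool → 𝒜 → ℝ := fun b a => (μ {ω | X ω = b ∧ A ω = a}).toReal with hpdef
  set q : 𝒜 → ℝ := fun a => (μ {ω | A ω = a}).toReal with hqdef
  set ρ : ℛ → ℝ := fun r => (μ {ω | R ω = r}).toReal with hρdef
  have hpnn : ∀ b a, 0 ≤ p b a := fun b a => ENNReal.toReal_nonneg
  have hqnn : ∀ a, 0 ≤ q a := fun a => ENNReal.toReal_nonneg
  have hρnn : ∀ r, 0 ≤ ρ r := fun r => ENNReal.toReal_nonneg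
  -- marginal split
  have hsplit : ∀ a, p false a + p true a = q a := by
    intro a
    have hu : {ω | A ω = a} = {ω | X ω = false ∧ A ω = a} ∪ {ω | X ω = true ∧ A ω = a} := by
      ext ω
      rcases Bool.dichotomy (X ω) with h | h <;> simp [h]
    have hdisj : Disjoint {ω | X ω = false ∧ A ω = a} {ω | X ω = true ∧ A ω = a} := by
      rw [Set.disjoint_left]
      rintro ω ⟨h1, -⟩ ⟨h2, -⟩
      rw [h1] at h2; exact absurd h2 (by simp)
    have hun := measure_union (μ := μ) hdisj (hm _)
    rw [← hu] at hun
    simp only [hpdef, hqdef]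
    rw [hun, ENNReal.toReal_add (measure_ne_top μ _) (measure_ne_top μ _)]
  have hq1 : ∑ a : 𝒜, q a = 1 := fiber_sum_one μ A
  have hρ1 : ∑ r : ℛ, ρ r = 1 := fiber_sum_one μ R
  have hple : ∀ b a, p b a ≤ q a := by
    intro b a
    rcases b
    · nlinarith [hsplit a, hpnn true a]
    · nlinarith [hsplit a, hpnn false a]
  set T : ℝ := ∑ a : 𝒜, |p false a - q a / 2| with hTdef
  have habs : ∀ b a, |p b a - q a / 2| = |p false a - q a / 2| := by
    intro b a
    rcases b
    · rfl
    · have h := hsplit a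
      have he : p true a - q a / 2 = -(p false a - q a / 2) := by linarith
      rw [he, abs_neg]
  -- success upper bound
  have hsucc : (μ {ω | f (A ω, R ω) = X ω}).toReal ≤ 1/2 + T := by
    set S : Finset (Bool × 𝒜 × ℛ) := Finset.univ.filter (fun c => f (c.2.1, c.2.2) = c.1) with hS
    have hset : {ω | f (A ω, R ω) = X ω} = (fun ω => (X ω, A ω, R ω)) ⁻¹' ↑S := by
      ext ω; simp [hS]
    have hmsum := MeasureTheory.sum_measure_preimage_singleton (μ := μ) S
        (f := fun ω => (X ω, A ω, R ω)) (fun c _ => hm _)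
    rw [← hset] at hmsum
    have hfib : ∀ c : Bool × 𝒜 × ℛ, ((fun ω => (X ω, A ω, R ω)) ⁻¹' {c})
        = {ω | X ω = c.1 ∧ A ω = c.2.1 ∧ R ω = c.2.2} := by
      intro c; ext ω; simp [Prod.ext_iff]
    calc (μ {ω | f (A ω, R ω) = X ω}).toReal
        = ∑ c ∈ S, (μ {ω | X ω = c.1 ∧ A ω = c.2.1 ∧ R ω = c.2.2}).toReal := by
          rw [← hmsum, ENNReal.toReal_sum (fun c _ => measure_ne_top μ _)]
          exact Finset.sum_congr rfl (fun c _ => by rw [hfib c])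
      _ = ∑ c ∈ S, p c.1 c.2.1 * ρ c.2.2 :=
          Finset.sum_congr rfl (fun c _ => hindep c.1 c.2.1 c.2.2)
      _ ≤ ∑ c ∈ S, (q c.2.1 / 2 + |p false c.2.1 - q c.2.1 / 2|) * ρ c.2.2 := by
          apply Finset.sum_le_sum
          intro c _
          apply mul_le_mul_of_nonneg_right _ (hρnn _)
          rw [← habs c.1 c.2.1]
          linarith [le_abs_self (p c.1 c.2.1 - q c.2.1 / 2)]
      _ = ∑ c : Bool × 𝒜 × ℛ, if f (c.2.1, c.2.2) = c.1 then
            (q c.2.1 / 2 + |p false c.2.1 - q c.2.1 / 2|) * ρ c.2.2 else 0 := by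
          rw [hS, Finset.sum_filter]
      _ = ∑ d : 𝒜 × ℛ, (q d.1 / 2 + |p false d.1 - q d.1 / 2|) * ρ d.2 := by
          rw [Fintype.sum_prod_type, Finset.sum_comm]
          apply Finset.sum_congr rfl
          intro d _
          simp
      _ = (∑ a : 𝒜, (q a / 2 + |p false a - q a / 2|)) * ∑ r : ℛ, ρ r := by
          rw [Fintype.sum_prod_type, Finset.sum_mul]
          exact Finset.sum_congr rfl (fun a _ => by rw [Finset.mul_sum])
      _ = 1/2 + T := by
          rw [hρ1, mul_one, Finset.sum_add_distrib, hTdef]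
          congr 1
          rw [← Finset.sum_div, hq1]
  have hT : 1/100 ≤ T := by linarith [hf.trans hsucc]
  -- Pinsker
  set u : Bool × 𝒜 → ℝ := fun c => p c.1 c.2 with hudef
  set v : Bool × 𝒜 → ℝ := fun c => q c.2 / 2 with hvdef
  have hunn : ∀ c, 0 ≤ u c := fun c => hpnn _ _
  have hvnn : ∀ c, 0 ≤ v c := fun c => by
    simp only [hvdef]; linarith [hqnn c.2]
  have hsumu : ∑ c : Bool × 𝒜, u c = 1 := by
    rw [Fintype.sum_prod_type, Finset.sum_comm]
    calc ∑ a : 𝒜, ∑ b : Bool, p b a = ∑ a : 𝒜, q a := by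
          apply Finset.sum_congr rfl
          intro a _
          rw [Fintype.sum_bool]
          linarith [hsplit a]
      _ = 1 := hq1
  have hsumv : ∑ c : Bool × 𝒜, v c = 1 := by
    rw [Fintype.sum_prod_type]
    simp only [hvdef]
    rw [Fintype.sum_bool, ← Finset.sum_div, hq1]
    norm_num
  have hsumw : ∑ c : Bool × 𝒜, |u c - v c| = 2 * T := by
    rw [Fintype.sum_prod_type, Fintype.sum_bool]
    simp only [hudef, hvdef, hTdef]
    rw [Finset.sum_congr rfl (fun a _ => habs true a)]
    ring
  have hvu : ∀ c, v c = 0 → u c = 0 := by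
    intro c h0
    have hq0 : q c.2 = 0 := by
      simp only [hvdef] at h0; linarith
    exact le_antisymm (by rw [← hq0]; exact hple c.1 c.2) (hunn c)
  have hpt : ∀ c : Bool × 𝒜, 3*(u c - v c)^2/(2*(u c + 2 * v c))
      ≤ u c * Real.log (u c / v c) - u c + v c :=
    fun c => key_xy (hunn c) (hvnn c) (hvu c)
  set D : ℝ := ∑ c : Bool × 𝒜, u c * Real.log (u c / v c) with hDdef
  have hD : 2 * T^2 ≤ D := by
    have h2 : ∑ c : Bool × 𝒜, (u c * Real.log (u c / v c) - u c + v c) = D := by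
      rw [Finset.sum_add_distrib, Finset.sum_sub_distrib, hsumu, hsumv, hDdef]
      ring
    set s' := Finset.univ.filter (fun c : Bool × 𝒜 => 0 < u c + 2 * v c) with hs'
    have hzero : ∀ c ∉ s', u c = 0 ∧ v c = 0 := by
      intro c hc
      rw [hs', Finset.mem_filter] at hc
      push_neg at hc
      have hle : u c + 2 * v c ≤ 0 := hc (Finset.mem_univ c)
      constructor <;> nlinarith [hunn c, hvnn c]
    have hw_eq : ∑ c ∈ s', |u c - v c| = 2 * T := by
      rw [← hsumw]
      exact Finset.sum_subset (Finset.subset_univ _)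
        (fun c _ hc => by obtain ⟨h1, h2⟩ := hzero c hc; simp [h1, h2])
    have hd_le : ∑ c ∈ s', (u c + 2 * v c) ≤ 3 := by
      calc ∑ c ∈ s', (u c + 2 * v c) ≤ ∑ c : Bool × 𝒜, (u c + 2 * v c) :=
            Finset.sum_le_sum_of_subset_of_nonneg (Finset.subset_univ _)
              (fun c _ _ => by linarith [hunn c, hvnn c])
        _ = 3 := by
            rw [Finset.sum_add_distrib, hsumu, ← Finset.mul_sum, hsumv]; norm_num
    have hs'pos : 0 < ∑ c ∈ s', (u c + 2 * v c) := by
      have h2T : (0:ℝ) < 2 * T := by linarith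
      rw [← hw_eq] at h2T
      have hne : s'.Nonempty := by
        by_contra hcon
        rw [Finset.not_nonempty_iff_eq_empty] at hcon
        rw [hcon, Finset.sum_empty] at h2T
        exact lt_irrefl 0 h2T
      exact Finset.sum_pos (fun c hc => (Finset.mem_filter.1 hc).2) hne
    have hCS := Finset.sq_sum_div_le_sum_sq_div s' (fun c => |u c - v c|)
        (g := fun c => u c + 2 * v c) (fun c hc => (Finset.mem_filter.1 hc).2)
    rw [hw_eq] at hCS
    have hCS2 : (2*T)^2 / 3 ≤ ∑ c ∈ s', |u c - v c| ^ 2 / (u c + 2 * v c) := by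
      refine le_trans ?_ hCS
      gcongr
    calc 2 * T^2 = (3/2) * ((2*T)^2 / 3) := by ring
      _ ≤ (3/2) * ∑ c ∈ s', |u c - v c| ^ 2 / (u c + 2 * v c) := by linarith
      _ = ∑ c ∈ s', 3 * (u c - v c)^2 / (2 * (u c + 2 * v c)) := by
          rw [Finset.mul_sum]
          apply Finset.sum_congr rfl
          intro c hc
          have hden : (0:ℝ) < u c + 2 * v c := (Finset.mem_filter.1 hc).2
          rw [sq_abs]
          field_simp
      _ ≤ ∑ c : Bool × 𝒜, 3 * (u c - v c)^2 / (2 * (u c + 2 * v c)) := by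
          apply Finset.sum_le_sum_of_subset_of_nonneg (Finset.subset_univ _)
          intro c _ _
          have : (0:ℝ) ≤ u c + 2 * v c := by linarith [hunn c, hvnn c]
          positivity
      _ ≤ ∑ c : Bool × 𝒜, (u c * Real.log (u c / v c) - u c + v c) :=
          Finset.sum_le_sum (fun c _ => hpt c)
      _ = D := h2
  -- conclude
  have hlog2 : 0 < Real.log 2 := Real.log_pos one_lt_two
  have hlog2' : Real.log 2 ≤ 1 := by
    linarith [Real.log_le_sub_one_of_pos (zero_lt_two (α := ℝ))]
  have hD0 : 0 ≤ D := le_trans (by positivity) hD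
  have hgoal : ∑ b : Bool, ∑ a : 𝒜, p b a * Real.logb 2 (p b a / (1/2 * q a))
      = D / Real.log 2 := by
    rw [hDdef, Fintype.sum_prod_type, Finset.sum_div]
    apply Finset.sum_congr rfl
    intro b _
    rw [Finset.sum_div]
    apply Finset.sum_congr rfl
    intro a _
    rw [Real.logb, mul_div_assoc]
    congr 3
    simp only [hudef, hvdef]
    ring
  simp only [hX]
  rw [hgoal]
  have h1 : (2:ℝ) / 10^4 ≤ 2 * T^2 := by nlinarith
  calc (2:ℝ)/10^4 ≤ 2 * T^2 := h1
    _ ≤ D := hD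
    _ ≤ D / Real.log 2 := by
        rw [le_div_iff₀ hlog2]
        nlinarith
end

section
/- There is an absolute constant C > 0 with the following property. Let m ≥ 1 be an integer and let 0 < a < b < 1. Let q₀ and q₁ be the probability mass functions on {0, 1, …, m} of Binom(m, a) and Binom(m, b) respectively, and let q̄ = (q₀ + q₁)/2. Then ½ Σ_{j=0}^{m} q₀(j) · log( q₀(j)/q̄(j) ) + ½ Σ_{j=0}^{m} q₁(j) · log( q₁(j)/q̄(j) ) ≤ C · m · (b − a)² / min(a, b, 1 − a, 1 − b). -/
set_option maxHeartbeats 1000000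

noncomputable def binomPMF (m : ℕ) (p : ℝ) (j : ℕ) : ℝ :=
  (m.choose j : ℝ) * p ^ j * (1 - p) ^ (m - j)

lemma binomPMF_pos {m j : ℕ} (hj : j ≤ m) {p : ℝ} (hp : 0 < p) (hp1 : p < 1) :
    0 < binomPMF m p j := by
  have hc : 0 < (m.choose j : ℝ) := by exact_mod_cast Nat.choose_pos hj
  have h1 : 0 < 1 - p := by linarith
  unfold binomPMF; positivity

lemma sum_binomPMF (m : ℕ) (p : ℝ) :
    ∑ j ∈ Finset.range (m + 1), binomPMF m p j = 1 := by
  calc ∑ j ∈ Finset.range (m + 1), binomPMF m p j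
      = ∑ j ∈ Finset.range (m + 1), p ^ j * (1 - p) ^ (m - j) * (m.choose j : ℝ) := by
        apply Finset.sum_congr rfl; intro j hj; unfold binomPMF; ring
    _ = (p + (1 - p)) ^ m := (add_pow p (1 - p) m).symm
    _ = 1 := by norm_num

lemma pt_bound {x y : ℝ} (hx : 0 < x) (hy : 0 < y) :
    (1/2) * (x * Real.log (x / ((x + y)/2))) + (1/2) * (y * Real.log (y / ((x + y)/2)))
      ≤ (Real.sqrt x - Real.sqrt y) ^ 2 := by
  have hq : 0 < (x + y)/2 := by linarith
  have h1 : Real.log (x / ((x + y)/2)) ≤ x / ((x + y)/2) - 1 :=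
    Real.log_le_sub_one_of_pos (by positivity)
  have h2 : Real.log (y / ((x + y)/2)) ≤ y / ((x + y)/2) - 1 :=
    Real.log_le_sub_one_of_pos (by positivity)
  have hA : x * Real.log (x / ((x + y)/2)) ≤ x * (x / ((x + y)/2) - 1) :=
    mul_le_mul_of_nonneg_left h1 hx.le
  have hB : y * Real.log (y / ((x + y)/2)) ≤ y * (y / ((x + y)/2) - 1) :=
    mul_le_mul_of_nonneg_left h2 hy.le
  have key : (1/2) * (x * (x / ((x + y)/2) - 1)) + (1/2) * (y * (y / ((x + y)/2) - 1))
      = (x - y)^2 / (2*(x + y)) := by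
    field_simp
    ring
  have hs : (x - y)^2 / (2*(x + y)) ≤ (Real.sqrt x - Real.sqrt y) ^ 2 := by
    rw [div_le_iff₀ (by linarith)]
    have hu := Real.sq_sqrt hx.le
    have hv := Real.sq_sqrt hy.le
    nlinarith [sq_nonneg ((Real.sqrt x - Real.sqrt y)^2), sq_nonneg (Real.sqrt x - Real.sqrt y),
      sq_nonneg (Real.sqrt x + Real.sqrt y)]
  linarith

/-- **One-coin mutual information upper bound.**
There is an absolute constant `C > 0` such that for every `m ≥ 1` and `0 < a < b < 1`,
letting `q₀, q₁` be the pmfs of `Binom(m, a)` and `Binom(m, b)` and `q̄ = (q₀ + q₁)/2`,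
we have `½ D(q₀‖q̄) + ½ D(q₁‖q̄) ≤ C · m · (b − a)² / min(a, b, 1 − a, 1 − b)`. -/
theorem stmt_1 : ∃ C : ℝ, 0 < C ∧
    ∀ m : ℕ, 1 ≤ m → ∀ a b : ℝ, 0 < a → a < b → b < 1 →
      (1 / 2) * (∑ j ∈ Finset.range (m + 1),
          binomPMF m a j *
            Real.log (binomPMF m a j / ((binomPMF m a j + binomPMF m b j) / 2))) +
        (1 / 2) * (∑ j ∈ Finset.range (m + 1),
          binomPMF m b j *
            Real.log (binomPMF m b j / ((binomPMF m a j + binomPMF m b j) / 2))) ≤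
      C * m * (b - a) ^ 2 / min (min a b) (min (1 - a) (1 - b)) := by
  refine ⟨1, one_pos, ?_⟩
  intro m hm a b ha hab hb1
  have ha1 : a < 1 := hab.trans hb1
  have hb : 0 < b := ha.trans hab
  set x := Real.sqrt (a * b) with hxdef
  set y := Real.sqrt ((1 - a) * (1 - b)) with hydef
  have hx2 : x ^ 2 = a * b := Real.sq_sqrt (by positivity)
  have hy2 : y ^ 2 = (1 - a) * (1 - b) := Real.sq_sqrt (by nlinarith)
  have hx0 : 0 ≤ x := Real.sqrt_nonneg _
  have hy0 : 0 ≤ y := Real.sqrt_nonneg _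
  have hsqrtprod : ∀ j ∈ Finset.range (m + 1),
      Real.sqrt (binomPMF m a j * binomPMF m b j)
        = (m.choose j : ℝ) * x ^ j * y ^ (m - j) := by
    intro j hj
    have h1 : (x ^ j) ^ 2 = (a * b) ^ j := by rw [← pow_mul, mul_comm j 2, pow_mul, hx2]
    have h2 : (y ^ (m - j)) ^ 2 = ((1 - a) * (1 - b)) ^ (m - j) := by
      rw [← pow_mul, mul_comm (m - j) 2, pow_mul, hy2]
    have hsq : binomPMF m a j * binomPMF m b j
        = ((m.choose j : ℝ) * x ^ j * y ^ (m - j)) ^ 2 := by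
      simp only [binomPMF]
      rw [mul_pow, mul_pow, h1, h2, mul_pow, mul_pow]
      ring
    rw [hsq, Real.sqrt_sq (by positivity)]
  have hsum_sqrt : ∑ j ∈ Finset.range (m + 1),
      Real.sqrt (binomPMF m a j * binomPMF m b j) = (x + y) ^ m := by
    rw [Finset.sum_congr rfl hsqrtprod]
    calc ∑ j ∈ Finset.range (m + 1), (m.choose j : ℝ) * x ^ j * y ^ (m - j)
        = ∑ j ∈ Finset.range (m + 1), x ^ j * y ^ (m - j) * (m.choose j : ℝ) := by
          apply Finset.sum_congr rfl; intro j hj; ring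
      _ = (x + y) ^ m := (add_pow x y m).symm
  have hstep1 : (1 / 2) * (∑ j ∈ Finset.range (m + 1),
          binomPMF m a j *
            Real.log (binomPMF m a j / ((binomPMF m a j + binomPMF m b j) / 2))) +
        (1 / 2) * (∑ j ∈ Finset.range (m + 1),
          binomPMF m b j *
            Real.log (binomPMF m b j / ((binomPMF m a j + binomPMF m b j) / 2)))
      ≤ ∑ j ∈ Finset.range (m + 1),
          (Real.sqrt (binomPMF m a j) - Real.sqrt (binomPMF m b j)) ^ 2 := by
    rw [Finset.mul_sum, Finset.mul_sum, ← Finset.sum_add_distrib]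
    apply Finset.sum_le_sum
    intro j hj
    have hj' : j ≤ m := Nat.lt_succ_iff.mp (Finset.mem_range.mp hj)
    exact pt_bound (binomPMF_pos hj' ha ha1) (binomPMF_pos hj' hb hb1)
  have hexp : ∑ j ∈ Finset.range (m + 1),
      (Real.sqrt (binomPMF m a j) - Real.sqrt (binomPMF m b j)) ^ 2
      = 2 - 2 * (x + y) ^ m := by
    have hpt : ∀ j ∈ Finset.range (m + 1),
        (Real.sqrt (binomPMF m a j) - Real.sqrt (binomPMF m b j)) ^ 2
          = binomPMF m a j + binomPMF m b j
              - 2 * Real.sqrt (binomPMF m a j * binomPMF m b j) := by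
      intro j hj
      have hj' : j ≤ m := Nat.lt_succ_iff.mp (Finset.mem_range.mp hj)
      have h0 := (binomPMF_pos hj' ha ha1).le
      have h1 := (binomPMF_pos hj' hb hb1).le
      rw [Real.sqrt_mul h0]
      rw [sub_sq, Real.sq_sqrt h0, Real.sq_sqrt h1]
      ring
    rw [Finset.sum_congr rfl hpt]
    rw [Finset.sum_sub_distrib, Finset.sum_add_distrib, ← Finset.mul_sum,
      sum_binomPMF, sum_binomPMF, hsum_sqrt]
    ring
  have hbern : 2 - 2 * (x + y) ^ m ≤ 2 * m * (1 - (x + y)) := by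
    have h := one_add_mul_le_pow (a := x + y - 1) (by linarith) m
    rw [show 1 + (x + y - 1) = x + y by ring] at h
    nlinarith
  set s := min (min a b) (min (1 - a) (1 - b)) with hsdef
  have hs_le_a : s ≤ a := le_trans (min_le_left _ _) (min_le_left _ _)
  have hs_le_b1 : s ≤ 1 - b := le_trans (min_le_right _ _) (min_le_right _ _)
  have hs_pos : 0 < s := by
    simp only [hsdef, lt_min_iff]
    refine ⟨⟨ha, hb⟩, ⟨by linarith, by linarith⟩⟩
  have hell : 2 * (1 - (x + y)) ≤ (b - a) ^ 2 / (2 * s) := by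
    have hua : Real.sqrt a ^ 2 = a := Real.sq_sqrt ha.le
    have hub : Real.sqrt b ^ 2 = b := Real.sq_sqrt hb.le
    have hva : Real.sqrt (1 - a) ^ 2 = 1 - a := Real.sq_sqrt (by linarith)
    have hvb : Real.sqrt (1 - b) ^ 2 = 1 - b := Real.sq_sqrt (by linarith)
    have hxeq : x = Real.sqrt a * Real.sqrt b := Real.sqrt_mul ha.le b
    have hyeq : y = Real.sqrt (1 - a) * Real.sqrt (1 - b) := Real.sqrt_mul (by linarith) _
    have hmono1 : Real.sqrt a ≤ Real.sqrt b := Real.sqrt_le_sqrt hab.le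
    have hmono2 : Real.sqrt (1 - b) ≤ Real.sqrt (1 - a) := Real.sqrt_le_sqrt (by linarith)
    have hna : 0 ≤ Real.sqrt a := Real.sqrt_nonneg _
    have hnb : 0 ≤ Real.sqrt b := Real.sqrt_nonneg _
    have hnva : 0 ≤ Real.sqrt (1 - a) := Real.sqrt_nonneg _
    have hnvb : 0 ≤ Real.sqrt (1 - b) := Real.sqrt_nonneg _
    have L : ∀ u v t : ℝ, 0 ≤ u → u ≤ v → 0 ≤ t → t ≤ u ^ 2 →
        (u - v) ^ 2 * (4 * t) ≤ (v ^ 2 - u ^ 2) ^ 2 := by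
      intro u v t hu huv ht hts
      nlinarith [mul_nonneg (sq_nonneg (u - v)) (sub_nonneg.2 hts),
        mul_nonneg (pow_nonneg (sub_nonneg.2 huv) 3) (by linarith : (0:ℝ) ≤ v + 3 * u)]
    have h1 : (Real.sqrt a - Real.sqrt b) ^ 2 * (4 * s) ≤ (b - a) ^ 2 := by
      have := L (Real.sqrt a) (Real.sqrt b) s hna hmono1 hs_pos.le (by rw [hua]; exact hs_le_a)
      rw [hua, hub] at this
      exact this
    have h2 : (Real.sqrt (1 - a) - Real.sqrt (1 - b)) ^ 2 * (4 * s) ≤ (b - a) ^ 2 := by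
      have := L (Real.sqrt (1 - b)) (Real.sqrt (1 - a)) s hnvb hmono2 hs_pos.le
        (by rw [hvb]; exact hs_le_b1)
      rw [hva, hvb] at this
      have hrw : ((1 - a) - (1 - b)) ^ 2 = (b - a) ^ 2 := by ring
      rw [hrw] at this
      calc (Real.sqrt (1 - a) - Real.sqrt (1 - b)) ^ 2 * (4 * s)
          = (Real.sqrt (1 - b) - Real.sqrt (1 - a)) ^ 2 * (4 * s) := by ring
        _ ≤ (b - a) ^ 2 := this
    have hid : 2 * (1 - (x + y))
        = (Real.sqrt a - Real.sqrt b) ^ 2 + (Real.sqrt (1 - a) - Real.sqrt (1 - b)) ^ 2 := by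
      rw [hxeq, hyeq]
      linear_combination - hua - hub - hva - hvb
    have h1' : (Real.sqrt a - Real.sqrt b) ^ 2 ≤ (b - a) ^ 2 / (4 * s) :=
      (le_div_iff₀ (by linarith)).2 h1
    have h2' : (Real.sqrt (1 - a) - Real.sqrt (1 - b)) ^ 2 ≤ (b - a) ^ 2 / (4 * s) :=
      (le_div_iff₀ (by linarith)).2 h2
    rw [hid]
    calc (Real.sqrt a - Real.sqrt b) ^ 2 + (Real.sqrt (1 - a) - Real.sqrt (1 - b)) ^ 2
        ≤ (b - a) ^ 2 / (4 * s) + (b - a) ^ 2 / (4 * s) := add_le_add h1' h2'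
      _ = (b - a) ^ 2 / (2 * s) := by field_simp; ring
  have hm1 : (1 : ℝ) ≤ m := by exact_mod_cast hm
  have hfinal : (m : ℝ) * ((b - a) ^ 2 / (2 * s)) ≤ 1 * m * (b - a) ^ 2 / s := by
    rw [one_mul, mul_div_assoc]
    have hdiv : (b - a) ^ 2 / (2 * s) ≤ (b - a) ^ 2 / s :=
      div_le_div_of_nonneg_left (sq_nonneg _) hs_pos (by linarith)
    exact mul_le_mul_of_nonneg_left hdiv (by positivity)
  calc _ ≤ ∑ j ∈ Finset.range (m + 1),
          (Real.sqrt (binomPMF m a j) - Real.sqrt (binomPMF m b j)) ^ 2 := hstep1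
    _ = 2 - 2 * (x + y) ^ m := hexp
    _ ≤ 2 * m * (1 - (x + y)) := hbern
    _ = (m : ℝ) * (2 * (1 - (x + y))) := by ring
    _ ≤ (m : ℝ) * ((b - a) ^ 2 / (2 * s)) :=
        mul_le_mul_of_nonneg_left hell (by positivity)
    _ ≤ 1 * m * (b - a) ^ 2 / s := hfinal
end
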